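/- For all integers m ≥ 1 and all positive integers r, V_m^+(r) = ∑_{n=1}^{r} ∑_{j=0}^{m−1} (−1)^{m−1−j} · C(m, j) · J_j(n). -/

import Mathlib

/-- Jordan totient: number of `m`-tuples `x` with `1 ≤ xᵢ ≤ n` and `gcd(x₁,…,x_m,n) = 1`. -/
def J (m n : ℕ) : ℕ :=
  ((Fintype.piFinset fun _ : Fin m => Finset.Icc (1 : ℕ) n).filter
    fun x => Nat.gcd (Finset.univ.gcd x) n = 1).card

/-- Number of lattice points visible from the origin in `(0, r]^m`. -/
noncomputable def Vplus (m r : ℕ) : ℕ :=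
  ((Fintype.piFinset fun _ : Fin m => Finset.Icc (1 : ℤ) (r : ℤ)).filter
    fun x => Finset.univ.gcd x = 1).card

open Finset

private lemma moebius_sum' (g : ℕ) :
    ∑ d ∈ g.divisors, ArithmeticFunction.moebius d = if g = 1 then 1 else 0 := by
  rw [← ArithmeticFunction.coe_mul_zeta_apply, ArithmeticFunction.moebius_mul_coe_zeta,
    ArithmeticFunction.one_apply]

private lemma card_dvd_pi' (k N d : ℕ) :
    (((Fintype.piFinset fun _ : Fin k => Finset.Icc 1 N)).filter
      (fun x => ∀ i, d ∣ x i)).card = (N / d) ^ k := by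
  have h1 : ((Fintype.piFinset fun _ : Fin k => Finset.Icc 1 N)).filter
      (fun x => ∀ i, d ∣ x i)
      = Fintype.piFinset fun _ : Fin k => (Finset.Icc 1 N).filter (d ∣ ·) := by
    ext x
    simp [Fintype.mem_piFinset, forall_and]
  have h2 : ((Finset.Icc 1 N).filter (d ∣ ·)).card = N / d := by
    rw [show Finset.Icc 1 N = Finset.Ioc 0 N from Finset.Icc_add_one_left_eq_Ioc 0 N]
    exact Nat.Ioc_filter_dvd_card_eq_div N d
  rw [h1, Fintype.card_piFinset]
  simp [h2]

private lemma key_count (k N : ℕ) (D : Finset ℕ) (G : (Fin k → ℕ) → ℕ)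
    (hGne : ∀ x ∈ (Fintype.piFinset fun _ : Fin k => Finset.Icc 1 N), G x ≠ 0)
    (hsub : ∀ x ∈ (Fintype.piFinset fun _ : Fin k => Finset.Icc 1 N), (G x).divisors ⊆ D)
    (hdvd : ∀ x ∈ (Fintype.piFinset fun _ : Fin k => Finset.Icc 1 N),
      ∀ d ∈ D, (d ∣ G x ↔ ∀ i, d ∣ x i)) :
    ((((Fintype.piFinset fun _ : Fin k => Finset.Icc 1 N)).filter
        (fun x => G x = 1)).card : ℤ)
      = ∑ d ∈ D, ArithmeticFunction.moebius d * ((N / d : ℕ) : ℤ) ^ k := by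
  have step1 : ((((Fintype.piFinset fun _ : Fin k => Finset.Icc 1 N)).filter
        (fun x => G x = 1)).card : ℤ)
      = ∑ x ∈ (Fintype.piFinset fun _ : Fin k => Finset.Icc 1 N), ∑ d ∈ D,
          if d ∣ G x then ArithmeticFunction.moebius d else 0 := by
    rw [Finset.card_filter]
    push_cast
    refine Finset.sum_congr rfl fun x hx => ?_
    have hset : D.filter (· ∣ G x) = (G x).divisors := by
      ext e
      simp only [Finset.mem_filter, Nat.mem_divisors]
      constructor
      · rintro ⟨_, h2⟩; exact ⟨h2, hGne x hx⟩
      · intro h; exact ⟨hsub x hx (Nat.mem_divisors.2 h), h.1⟩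
    rw [← Finset.sum_filter, hset, moebius_sum' (G x)]
  rw [step1, Finset.sum_comm]
  refine Finset.sum_congr rfl fun d hd => ?_
  rw [← Finset.sum_filter,
    Finset.filter_congr (fun x hx => by simpa using hdvd x hx d hd),
    Finset.sum_const, card_dvd_pi' k N d, nsmul_eq_mul]
  push_cast
  ring

private lemma J_formula (j n : ℕ) (hn : n ≠ 0) :
    (J j n : ℤ) = ∑ d ∈ n.divisors,
      ArithmeticFunction.moebius d * ((n / d : ℕ) : ℤ) ^ j := by
  refine key_count j n n.divisors _ ?_ ?_ ?_
  · intro x _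
    simp [Nat.gcd_eq_zero_iff, hn]
  · intro x _
    exact Nat.divisors_subset_of_dvd hn (Nat.gcd_dvd_right _ _)
  · intro x _ d hd
    rw [Nat.dvd_gcd_iff, Finset.dvd_gcd_iff]
    simp [Nat.dvd_of_mem_divisors hd]

private lemma gcd_cast' {ι : Type*} (s : Finset ι) (f : ι → ℕ) :
    s.gcd (fun i => ((f i : ℕ) : ℤ)) = ((s.gcd f : ℕ) : ℤ) := by
  classical
  induction s using Finset.induction with
  | empty => simp
  | insert _ _ h ih =>
    rw [Finset.gcd_insert, Finset.gcd_insert, ih, ← Int.coe_gcd, Int.gcd_natCast_natCast]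
    rfl

private lemma Vplus_eq_natcard (m r : ℕ) :
    Vplus m r = (((Fintype.piFinset fun _ : Fin m => Finset.Icc 1 r)).filter
      (fun x => Finset.univ.gcd x = 1)).card := by
  unfold Vplus
  refine Finset.card_nbij' (fun x i => (x i).toNat) (fun y i => ((y i : ℕ) : ℤ)) ?_ ?_ ?_ ?_
  · intro x hx
    simp only [Finset.mem_coe, Finset.mem_filter, Fintype.mem_piFinset, Finset.mem_Icc] at hx ⊢
    obtain ⟨h1, h2⟩ := hx
    have hvals : ∀ i, ((x i).toNat : ℤ) = x i :=
      fun i => Int.toNat_of_nonneg (by linarith [(h1 i).1])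
    constructor
    · intro i
      obtain ⟨ha, hb⟩ := h1 i
      omega
    · have h3 : Finset.univ.gcd (fun i => (((x i).toNat : ℕ) : ℤ))
          = ((Finset.univ.gcd (fun i => (x i).toNat) : ℕ) : ℤ) := gcd_cast' _ _
      have hx' : Finset.univ.gcd (fun i => (((x i).toNat : ℕ) : ℤ)) = Finset.univ.gcd x :=
        Finset.gcd_congr rfl (fun i _ => hvals i)
      rw [hx', h2] at h3
      exact_mod_cast h3.symm
  · intro y hy
    simp only [Finset.mem_coe, Finset.mem_filter, Fintype.mem_piFinset, Finset.mem_Icc] at hy ⊢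
    obtain ⟨h1, h2⟩ := hy
    constructor
    · intro i
      obtain ⟨ha, hb⟩ := h1 i
      constructor <;> exact_mod_cast (by assumption)
    · rw [gcd_cast' , h2]; rfl
  · intro x hx
    simp only [Finset.mem_coe, Finset.mem_filter, Fintype.mem_piFinset, Finset.mem_Icc] at hx
    funext i
    exact Int.toNat_of_nonneg (by linarith [(hx.1 i).1])
  · intro y hy
    funext i
    simp


private lemma binom_sum (m : ℕ) (hm : 1 ≤ m) (x : ℤ) :
    ∑ j ∈ Finset.range m, (-1 : ℤ) ^ (m - 1 - j) * (m.choose j : ℤ) * x ^ j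
      = x ^ m - (x - 1) ^ m := by
  have h : (x - 1) ^ m = ∑ j ∈ Finset.range (m + 1),
      x ^ j * (-1 : ℤ) ^ (m - j) * (m.choose j : ℤ) := by
    rw [sub_eq_add_neg, add_pow]
  rw [h, Finset.sum_range_succ]
  simp only [Nat.sub_self, pow_zero, Nat.choose_self, Nat.cast_one, mul_one]
  have hxx : ∀ S : ℤ, x ^ m - (S + x ^ m) = -S := fun S => by ring
  rw [hxx, ← Finset.sum_neg_distrib]
  refine Finset.sum_congr rfl fun j hj => ?_
  have hj' : j < m := Finset.mem_range.1 hj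
  have he : m - j = (m - 1 - j) + 1 := by omega
  rw [he, pow_succ]
  ring

private lemma swap_divisors (r : ℕ) (F : ℕ → ℕ → ℤ) :
    ∑ n ∈ Finset.Icc 1 r, ∑ d ∈ n.divisors, F d (n / d)
      = ∑ d ∈ Finset.Icc 1 r, ∑ q ∈ Finset.Icc 1 (r / d), F d q := by
  rw [Finset.sum_sigma', Finset.sum_sigma']
  refine Finset.sum_nbij' (fun p => ⟨p.2, p.1 / p.2⟩) (fun p => ⟨p.1 * p.2, p.1⟩)
    ?_ ?_ ?_ ?_ ?_
  · rintro ⟨n, d⟩ hp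
    simp only [Finset.mem_sigma, Finset.mem_Icc, Nat.mem_divisors] at hp ⊢
    obtain ⟨⟨hn1, hn2⟩, hd, hn0⟩ := hp
    refine ⟨⟨?_, ?_⟩, ?_, ?_⟩
    · exact Nat.pos_of_dvd_of_pos hd hn1
    · exact le_trans (Nat.le_of_dvd hn1 hd) hn2
    · exact Nat.one_le_div_iff (Nat.pos_of_dvd_of_pos hd hn1) |>.2 (Nat.le_of_dvd hn1 hd)
    · exact Nat.div_le_div_right hn2
  · rintro ⟨d, q⟩ hp
    simp only [Finset.mem_sigma, Finset.mem_Icc, Nat.mem_divisors] at hp ⊢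
    obtain ⟨⟨hd1, hd2⟩, hq1, hq2⟩ := hp
    have hdr : d * q ≤ r := by
      calc d * q ≤ d * (r / d) := Nat.mul_le_mul_left d hq2
      _ ≤ r := Nat.mul_div_le r d
    exact ⟨⟨Nat.one_le_iff_ne_zero.2 (by positivity), hdr⟩, Dvd.intro q rfl, by positivity⟩
  · rintro ⟨n, d⟩ hp
    simp only [Finset.mem_sigma, Finset.mem_Icc, Nat.mem_divisors] at hp
    obtain ⟨⟨hn1, hn2⟩, hd, hn0⟩ := hp
    simp [Nat.mul_div_cancel' hd]
  · rintro ⟨d, q⟩ hp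
    simp only [Finset.mem_sigma, Finset.mem_Icc] at hp
    have hd0 : 0 < d := hp.1.1
    simp [Nat.mul_div_cancel_left q hd0]
  · rintro ⟨n, d⟩ hp
    rfl

private lemma telescope (m K : ℕ) (hm : 1 ≤ m) :
    ∑ q ∈ Finset.Icc 1 K, ((q : ℤ) ^ m - ((q : ℤ) - 1) ^ m) = (K : ℤ) ^ m := by
  have h : ∑ q ∈ Finset.Icc 1 K, ((q : ℤ) ^ m - ((q : ℤ) - 1) ^ m)
      = ∑ i ∈ Finset.range K, (((i + 1 : ℕ) : ℤ) ^ m - ((i : ℕ) : ℤ) ^ m) := by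
    refine Finset.sum_nbij' (fun q => q - 1) (fun i => i + 1) ?_ ?_ ?_ ?_ ?_
    · intro q hq; simp only [Finset.mem_Icc] at hq; simp only [Finset.mem_range]; omega
    · intro i hi; simp only [Finset.mem_range] at hi; simp only [Finset.mem_Icc]; omega
    · intro q hq; simp only [Finset.mem_Icc] at hq; omega
    · intro i _; omega
    · intro q hq
      simp only [Finset.mem_Icc] at hq
      have : q - 1 + 1 = q := by omega
      rw [this]
      congr 2
      push_cast [Nat.cast_sub hq.1]
      ring
  rw [h, Finset.sum_range_sub (fun i => ((i : ℕ) : ℤ) ^ m)]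
  simp [zero_pow (by omega : m ≠ 0)]


private lemma Vplus_formula (m r : ℕ) (hm : 1 ≤ m) :
    (Vplus m r : ℤ) = ∑ d ∈ Finset.Icc 1 r,
      ArithmeticFunction.moebius d * ((r / d : ℕ) : ℤ) ^ m := by
  rw [Vplus_eq_natcard]
  have i0 : Fin m := ⟨0, hm⟩
  refine key_count m r (Finset.Icc 1 r) _ ?_ ?_ ?_
  · intro x hx
    simp only [Fintype.mem_piFinset, Finset.mem_Icc] at hx
    intro hg
    have h1 := Finset.gcd_eq_zero_iff.1 hg i0 (Finset.mem_univ _)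
    have h2 := (hx i0).1
    omega
  · intro x hx e he
    simp only [Fintype.mem_piFinset, Finset.mem_Icc] at hx
    have h1 : e ∣ x i0 := dvd_trans (Nat.dvd_of_mem_divisors he)
      (Finset.gcd_dvd (Finset.mem_univ i0))
    simp only [Finset.mem_Icc]
    exact ⟨Nat.pos_of_mem_divisors he,
      le_trans (Nat.le_of_dvd (hx i0).1 h1) (hx i0).2⟩
  · intro x _ d _
    rw [Finset.dvd_gcd_iff]
    simp

theorem Vplus_eq_alternating_sum (m : ℕ) (hm : 1 ≤ m) (r : ℕ) (hr : 0 < r) :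
    (Vplus m r : ℤ) =
      ∑ n ∈ Finset.Icc 1 r, ∑ j ∈ Finset.range m,
        (-1 : ℤ) ^ (m - 1 - j) * (m.choose j : ℤ) * (J j n : ℤ) := by
  have hA : ∀ n ∈ Finset.Icc 1 r,
      ∑ j ∈ Finset.range m, (-1 : ℤ) ^ (m - 1 - j) * (m.choose j : ℤ) * (J j n : ℤ)
        = ∑ d ∈ n.divisors, ArithmeticFunction.moebius d *
            (((n / d : ℕ) : ℤ) ^ m - (((n / d : ℕ) : ℤ) - 1) ^ m) := by
    intro n hn
    have hn0 : n ≠ 0 := by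
      simp only [Finset.mem_Icc] at hn; omega
    calc ∑ j ∈ Finset.range m, (-1 : ℤ) ^ (m - 1 - j) * (m.choose j : ℤ) * (J j n : ℤ)
        = ∑ j ∈ Finset.range m, ∑ d ∈ n.divisors,
            (-1 : ℤ) ^ (m - 1 - j) * (m.choose j : ℤ) *
              (ArithmeticFunction.moebius d * ((n / d : ℕ) : ℤ) ^ j) := by
          refine Finset.sum_congr rfl fun j _ => ?_
          rw [J_formula j n hn0, Finset.mul_sum]
      _ = ∑ d ∈ n.divisors, ∑ j ∈ Finset.range m,
            (-1 : ℤ) ^ (m - 1 - j) * (m.choose j : ℤ) *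
              (ArithmeticFunction.moebius d * ((n / d : ℕ) : ℤ) ^ j) := Finset.sum_comm
      _ = ∑ d ∈ n.divisors, ArithmeticFunction.moebius d *
            (((n / d : ℕ) : ℤ) ^ m - (((n / d : ℕ) : ℤ) - 1) ^ m) := by
          refine Finset.sum_congr rfl fun d _ => ?_
          rw [← binom_sum m hm ((n / d : ℕ) : ℤ), Finset.mul_sum]
          exact Finset.sum_congr rfl fun j _ => by ring
  calc (Vplus m r : ℤ)
      = ∑ d ∈ Finset.Icc 1 r,
          ArithmeticFunction.moebius d * ((r / d : ℕ) : ℤ) ^ m := Vplus_formula m r hm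
    _ = ∑ d ∈ Finset.Icc 1 r, ∑ q ∈ Finset.Icc 1 (r / d),
          ArithmeticFunction.moebius d * ((q : ℤ) ^ m - ((q : ℤ) - 1) ^ m) := by
        refine Finset.sum_congr rfl fun d _ => ?_
        rw [← Finset.mul_sum, telescope m (r / d) hm]
    _ = ∑ n ∈ Finset.Icc 1 r, ∑ d ∈ n.divisors,
          ArithmeticFunction.moebius d *
            (((n / d : ℕ) : ℤ) ^ m - (((n / d : ℕ) : ℤ) - 1) ^ m) :=
        (swap_divisors r (fun d q =>
          ArithmeticFunction.moebius d * ((q : ℤ) ^ m - ((q : ℤ) - 1) ^ m))).symm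
    _ = ∑ n ∈ Finset.Icc 1 r, ∑ j ∈ Finset.range m,
          (-1 : ℤ) ^ (m - 1 - j) * (m.choose j : ℤ) * (J j n : ℤ) :=
        (Finset.sum_congr rfl hA).symm
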